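/- arXiv:math/0609134 — 3 statements merged into one kernel-verified Lean document; each statement's English description precedes it below -/
import Mathlib

section
/- Given non-negative integers m, n, h and k with m ≥ h > 1 and n ≥ k > 1, a pair of non-decreasing sequences A = [a₁, a₂, ..., a_m] and B = [b₁, b₂, ..., b_n] of non-negative integers is the pair of losing score lists of some [h-k]-bipartite hypertournament on vertex sets of sizes m and n if and only if for every p with 1 ≤ p ≤ m and every q with 1 ≤ q ≤ n, ∑_{i=1}^{p} a_i + ∑_{j=1}^{q} b_j ≥ C(p,h)·C(q,k), with equality when p = m and q = n (where C(p,q) denotes the binomial coefficient, taken to be 0 when p < q). -/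
open Finset

variable {m n : ℕ}

/-- The set `U₁.image Sum.inl ∪ V₁.image Sum.inr`. -/
def pairSet (U₁ : Finset (Fin m)) (V₁ : Finset (Fin n)) : Finset (Fin m ⊕ Fin n) :=
  U₁.image Sum.inl ∪ V₁.image Sum.inr

@[simp] lemma mem_pairSet_inl {U₁ : Finset (Fin m)} {V₁ : Finset (Fin n)} {i : Fin m} :
    Sum.inl i ∈ pairSet U₁ V₁ ↔ i ∈ U₁ := by simp [pairSet]

@[simp] lemma mem_pairSet_inr {U₁ : Finset (Fin m)} {V₁ : Finset (Fin n)} {j : Fin n} :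
    Sum.inr j ∈ pairSet U₁ V₁ ↔ j ∈ V₁ := by simp [pairSet]

lemma pairSet_inj {U₁ U₂ : Finset (Fin m)} {V₁ V₂ : Finset (Fin n)}
    (hp : pairSet U₁ V₁ = pairSet U₂ V₂) : U₁ = U₂ ∧ V₁ = V₂ := by
  constructor
  · ext i
    rw [← mem_pairSet_inl (V₁ := V₁), hp, mem_pairSet_inl]
  · ext j
    rw [← mem_pairSet_inr (U₁ := U₁), hp, mem_pairSet_inr]

/-- left component of a finset of sums -/
def leftOf (A : Finset (Fin m ⊕ Fin n)) : Finset (Fin m) :=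
  Finset.univ.filter (fun i => Sum.inl i ∈ A)

def rightOf (A : Finset (Fin m ⊕ Fin n)) : Finset (Fin n) :=
  Finset.univ.filter (fun j => Sum.inr j ∈ A)

@[simp] lemma mem_leftOf {A : Finset (Fin m ⊕ Fin n)} {i : Fin m} :
    i ∈ leftOf A ↔ Sum.inl i ∈ A := by simp [leftOf]

@[simp] lemma mem_rightOf {A : Finset (Fin m ⊕ Fin n)} {j : Fin n} :
    j ∈ rightOf A ↔ Sum.inr j ∈ A := by simp [rightOf]

lemma pairSet_leftOf_rightOf (A : Finset (Fin m ⊕ Fin n)) :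
    pairSet (leftOf A) (rightOf A) = A := by
  ext w
  cases w <;> simp

@[simp] lemma leftOf_pairSet (U₁ : Finset (Fin m)) (V₁ : Finset (Fin n)) :
    leftOf (pairSet U₁ V₁) = U₁ := by ext i; simp

@[simp] lemma rightOf_pairSet (U₁ : Finset (Fin m)) (V₁ : Finset (Fin n)) :
    rightOf (pairSet U₁ V₁) = V₁ := by ext j; simp

lemma card_leftOf (A : Finset (Fin m ⊕ Fin n)) :
    (leftOf A).card = (A.filter (fun w => w.isLeft)).card := by
  apply Finset.card_nbij (fun i => Sum.inl i)
  · intro i hi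
    simp only [mem_coe, mem_leftOf] at hi
    simp [hi]
  · intro x hx y hy hxy
    simpa using hxy
  · intro w hw
    simp only [coe_filter, Set.mem_setOf_eq] at hw
    obtain ⟨hw1, hw2⟩ := hw
    cases w with
    | inl i => exact ⟨i, by simpa using hw1, rfl⟩
    | inr j => simp at hw2

lemma card_rightOf (A : Finset (Fin m ⊕ Fin n)) :
    (rightOf A).card = (A.filter (fun w => w.isRight)).card := by
  apply Finset.card_nbij (fun j => Sum.inr j)
  · intro j hj
    simp only [mem_coe, mem_rightOf] at hj
    simp [hj]
  · intro x hx y hy hxy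
    simpa using hxy
  · intro w hw
    simp only [coe_filter, Set.mem_setOf_eq] at hw
    obtain ⟨hw1, hw2⟩ := hw
    cases w with
    | inl i => simp at hw2
    | inr j => exact ⟨j, by simpa using hw1, rfl⟩

lemma card_filter_toFinset {α : Type*} [DecidableEq α] {l : List α} (hl : l.Nodup)
    (p : α → Bool) : (l.toFinset.filter (fun x => p x)).card = (l.filter p).length := by
  rw [← List.toFinset_filter, List.toFinset_card_of_nodup (hl.filter p)]

/-- An [h-k]-bipartite hypertournament on vertex sets `Fin m` and `Fin n`:
a set of arcs, each a duplicate-free list (tuple) of vertices with exactly `h`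
entries from `U = Fin m` and exactly `k` entries from `V = Fin n`, such that for
every `h`-subset `U₁` of `U` and `k`-subset `V₁` of `V` there is exactly one arc
whose set of entries is `U₁ ∪ V₁`. -/
structure BipartiteHypertournament (m n h k : ℕ) where
  arcs : Finset (List (Fin m ⊕ Fin n))
  nodup : ∀ e ∈ arcs, e.Nodup
  left_count : ∀ e ∈ arcs, (e.filter (fun x => x.isLeft)).length = h
  right_count : ∀ e ∈ arcs, (e.filter (fun x => x.isRight)).length = k
  complete : ∀ (U₁ : Finset (Fin m)) (V₁ : Finset (Fin n)), U₁.card = h → V₁.card = k →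
    ∃! e, e ∈ arcs ∧ e.toFinset = U₁.image Sum.inl ∪ V₁.image Sum.inr

/-- The losing score of a vertex `w`: the number of arcs containing `w` in which
`w` is the last entry. -/
def losingScore {m n h k : ℕ} (H : BipartiteHypertournament m n h k)
    (w : Fin m ⊕ Fin n) : ℕ :=
  (H.arcs.filter (fun e => e.getLast? = some w)).card

/-- `a` (on indices `< m`) and `b` (on indices `< n`) list, up to order, the losing
scores of the vertices of `U` and of `V` respectively. -/
def IsLosingScoreLists (m n h k : ℕ) (a b : ℕ → ℕ) : Prop :=
  ∃ (H : BipartiteHypertournament m n h k) (σ : Equiv.Perm (Fin m)) (τ : Equiv.Perm (Fin n)),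
    (∀ i : Fin m, a i.val = losingScore H (Sum.inl (σ i))) ∧
    (∀ j : Fin n, b j.val = losingScore H (Sum.inr (τ j)))

section
variable {h k : ℕ} (H : BipartiteHypertournament m n h k)

def lastOf (d : Fin m ⊕ Fin n) (e : List (Fin m ⊕ Fin n)) : Fin m ⊕ Fin n :=
  e.getLast?.getD d

lemma arc_ne_nil {e : List (Fin m ⊕ Fin n)} (he : e ∈ H.arcs) (hh : 0 < h) : e ≠ [] := by
  intro hnil
  have := H.left_count e he
  rw [hnil] at this
  simp at this
  omega

lemma getLast?_eq_lastOf {e : List (Fin m ⊕ Fin n)} (he : e ≠ []) (d : Fin m ⊕ Fin n) :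
    e.getLast? = some (lastOf d e) := by
  rw [List.getLast?_eq_getLast he]
  simp [lastOf, List.getLast?_eq_getLast he]

lemma lastOf_mem {e : List (Fin m ⊕ Fin n)} (he : e ≠ []) (d : Fin m ⊕ Fin n) :
    lastOf d e ∈ e := by
  have := List.getLast_mem he
  rw [lastOf, List.getLast?_eq_getLast he]
  simpa using this

lemma losingScore_eq (hh : 0 < h) (d w : Fin m ⊕ Fin n) :
    losingScore H w = (H.arcs.filter (fun e => lastOf d e = w)).card := by
  unfold losingScore
  congr 1
  apply Finset.filter_congr
  intro e he
  rw [getLast?_eq_lastOf (arc_ne_nil H he hh) d]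
  simp

lemma sum_losingScore (hh : 0 < h) (d : Fin m ⊕ Fin n) (S : Finset (Fin m ⊕ Fin n)) :
    ∑ w ∈ S, losingScore H w = (H.arcs.filter (fun e => lastOf d e ∈ S)).card := by
  rw [Finset.card_eq_sum_card_fiberwise (f := lastOf d) (s := H.arcs.filter (fun e => lastOf d e ∈ S)) (t := S)
    (fun e he => (Finset.mem_filter.mp (Finset.mem_coe.mp he)).2)]
  apply Finset.sum_congr rfl
  intro w hw
  rw [losingScore_eq H hh d w]
  congr 1
  rw [Finset.filter_filter]
  apply Finset.filter_congr
  intro e he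
  exact ⟨fun hx => ⟨by rw [hx]; exact hw, hx⟩, fun hx => hx.2⟩

end

section
variable {h k : ℕ} (H : BipartiteHypertournament m n h k)

lemma pairSet_mono {U₁ S_U : Finset (Fin m)} {V₁ S_V : Finset (Fin n)}
    (hU : U₁ ⊆ S_U) (hV : V₁ ⊆ S_V) : pairSet U₁ V₁ ⊆ pairSet S_U S_V := by
  intro w hw
  cases w with
  | inl i => rw [mem_pairSet_inl] at hw ⊢; exact hU hw
  | inr j => rw [mem_pairSet_inr] at hw ⊢; exact hV hw

lemma card_leftOf_arc {e : List (Fin m ⊕ Fin n)} (he : e ∈ H.arcs) :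
    (leftOf e.toFinset).card = h := by
  rw [card_leftOf, card_filter_toFinset (H.nodup e he), H.left_count e he]

lemma card_rightOf_arc {e : List (Fin m ⊕ Fin n)} (he : e ∈ H.arcs) :
    (rightOf e.toFinset).card = k := by
  rw [card_rightOf, card_filter_toFinset (H.nodup e he), H.right_count e he]

noncomputable def arcOf (U₁ : Finset (Fin m)) (V₁ : Finset (Fin n))
    (h1 : U₁.card = h) (h2 : V₁.card = k) : List (Fin m ⊕ Fin n) :=
  (H.complete U₁ V₁ h1 h2).choose

lemma arcOf_mem (U₁ : Finset (Fin m)) (V₁ : Finset (Fin n))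
    (h1 : U₁.card = h) (h2 : V₁.card = k) : arcOf H U₁ V₁ h1 h2 ∈ H.arcs :=
  (H.complete U₁ V₁ h1 h2).choose_spec.1.1

lemma arcOf_toFinset (U₁ : Finset (Fin m)) (V₁ : Finset (Fin n))
    (h1 : U₁.card = h) (h2 : V₁.card = k) :
    (arcOf H U₁ V₁ h1 h2).toFinset = pairSet U₁ V₁ :=
  (H.complete U₁ V₁ h1 h2).choose_spec.1.2

lemma arcOf_unique {U₁ : Finset (Fin m)} {V₁ : Finset (Fin n)}
    {h1 : U₁.card = h} {h2 : V₁.card = k} {e : List (Fin m ⊕ Fin n)}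
    (he : e ∈ H.arcs) (ht : e.toFinset = pairSet U₁ V₁) : e = arcOf H U₁ V₁ h1 h2 :=
  (H.complete U₁ V₁ h1 h2).choose_spec.2 e ⟨he, ht⟩

lemma card_arcs : H.arcs.card = Nat.choose m h * Nat.choose n k := by
  have : ((Finset.univ.powersetCard h : Finset (Finset (Fin m))) ×ˢ
      (Finset.univ.powersetCard k : Finset (Finset (Fin n)))).card
      = Nat.choose m h * Nat.choose n k := by
    simp [Finset.card_powersetCard]
  rw [← this]
  apply Finset.card_nbij (fun e => (leftOf e.toFinset, rightOf e.toFinset))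
  · intro e he
    exact Finset.mem_product.mpr ⟨Finset.mem_powersetCard.mpr
      ⟨Finset.subset_univ _, card_leftOf_arc H he⟩,
      Finset.mem_powersetCard.mpr ⟨Finset.subset_univ _, card_rightOf_arc H he⟩⟩
  · intro e1 he1 e2 he2 heq
    simp only [Prod.mk.injEq] at heq
    have ht1 : e1.toFinset = pairSet (leftOf e1.toFinset) (rightOf e1.toFinset) :=
      (pairSet_leftOf_rightOf _).symm
    have ht2 : e2.toFinset = pairSet (leftOf e1.toFinset) (rightOf e1.toFinset) := by
      rw [heq.1, heq.2]; exact (pairSet_leftOf_rightOf _).symm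
    have c1 := card_leftOf_arc H he1
    have c2 := card_rightOf_arc H he1
    rw [arcOf_unique H (h1 := c1) (h2 := c2) he1 ht1,
      arcOf_unique H (h1 := c1) (h2 := c2) he2 ht2]
  · rintro ⟨U₁, V₁⟩ hUV
    simp only [coe_product, Set.mem_prod, mem_coe, Finset.mem_powersetCard] at hUV
    refine ⟨arcOf H U₁ V₁ hUV.1.2 hUV.2.2, arcOf_mem H _ _ _ _, ?_⟩
    show (leftOf _, rightOf _) = (U₁, V₁)
    rw [arcOf_toFinset, leftOf_pairSet, rightOf_pairSet]

lemma key_count (hh : 0 < h) (d : Fin m ⊕ Fin n)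
    (S_U : Finset (Fin m)) (S_V : Finset (Fin n)) :
    Nat.choose S_U.card h * Nat.choose S_V.card k ≤
      ∑ w ∈ pairSet S_U S_V, losingScore H w := by
  rw [sum_losingScore H hh d]
  have hcard : (S_U.powersetCard h ×ˢ S_V.powersetCard k).card
      = Nat.choose S_U.card h * Nat.choose S_V.card k := by
    simp [Finset.card_powersetCard]
  rw [← hcard]
  apply Finset.card_le_card_of_injOn
    (f := fun x => if hx : x.1.card = h ∧ x.2.card = k then arcOf H x.1 x.2 hx.1 hx.2 else [])
  · rintro ⟨U₁, V₁⟩ hUV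
    simp only [Finset.mem_coe, Finset.mem_product, Finset.mem_powersetCard] at hUV
    obtain ⟨⟨hU1, hU2⟩, hV1, hV2⟩ := hUV
    simp only [Finset.mem_coe]
    rw [dif_pos (show U₁.card = h ∧ V₁.card = k from ⟨hU2, hV2⟩)]
    rw [Finset.mem_filter]
    refine ⟨arcOf_mem H _ _ _ _, ?_⟩
    apply pairSet_mono hU1 hV1
    rw [← arcOf_toFinset H U₁ V₁ hU2 hV2, List.mem_toFinset]
    exact lastOf_mem (arc_ne_nil H (arcOf_mem H _ _ _ _) hh) d
  · rintro ⟨U₁, V₁⟩ hUV ⟨U₂, V₂⟩ hUV' heq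
    simp only [Finset.coe_product, Set.mem_prod, mem_coe, Finset.mem_powersetCard] at hUV hUV'
    dsimp only at heq
    rw [dif_pos ⟨hUV.1.2, hUV.2.2⟩, dif_pos ⟨hUV'.1.2, hUV'.2.2⟩] at heq
    have : pairSet U₁ V₁ = pairSet U₂ V₂ := by
      rw [← arcOf_toFinset H U₁ V₁ hUV.1.2 hUV.2.2, ← arcOf_toFinset H U₂ V₂ hUV'.1.2 hUV'.2.2,
        heq]
    obtain ⟨e1, e2⟩ := pairSet_inj this
    simp [e1, e2]

end

lemma strictMono_le_apply' {p M : ℕ} {g : Fin p → Fin M} (hg : StrictMono g) :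
    ∀ j (hj : j < p), j ≤ (g ⟨j, hj⟩).val := by
  intro j
  induction j with
  | zero => omega
  | succ t ih =>
    intro hj
    have h1 : t < p := by omega
    have h2 := hg (show (⟨t, h1⟩ : Fin p) < ⟨t + 1, hj⟩ by simp [Fin.lt_def])
    have h3 := ih h1
    rw [Fin.lt_def] at h2
    omega

lemma sum_range_le_sum_subset {M p : ℕ} {f : ℕ → ℕ}
    (hf : ∀ i j, i ≤ j → j < M → f i ≤ f j) (S : Finset (Fin M)) (hS : S.card = p) :
    ∑ i ∈ Finset.range p, f i ≤ ∑ u ∈ S, f u.val := by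
  classical
  have hmono : StrictMono (fun i : Fin p => S.orderEmbOfFin hS i) :=
    (S.orderEmbOfFin hS).strictMono
  have hSim : S = Finset.univ.image (fun i : Fin p => S.orderEmbOfFin hS i) := by
    ext u
    constructor
    · intro hu
      have : u ∈ Set.range (S.orderEmbOfFin hS) := by
        rw [Finset.range_orderEmbOfFin]; exact hu
      obtain ⟨i, hi⟩ := this
      exact Finset.mem_image.mpr ⟨i, Finset.mem_univ _, hi⟩
    · rintro hu
      obtain ⟨i, _, rfl⟩ := Finset.mem_image.mp hu
      exact Finset.orderEmbOfFin_mem S hS i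
  rw [hSim, Finset.sum_image (fun x _ y _ hxy => hmono.injective hxy)]
  rw [← Fin.sum_univ_eq_sum_range]
  apply Finset.sum_le_sum
  intro i _
  apply hf
  · exact strictMono_le_apply' hmono i.val i.isLt
  · exact (S.orderEmbOfFin hS i).isLt

lemma filter_image_val {M p : ℕ} (hp : p ≤ M) :
    (Finset.univ.filter (fun i : Fin M => i.val < p)).image Fin.val = Finset.range p := by
  ext j
  simp only [Finset.mem_image, Finset.mem_filter, Finset.mem_univ, true_and, Finset.mem_range]
  constructor
  · rintro ⟨i, hi, rfl⟩; exact hi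
  · intro hj; exact ⟨⟨j, lt_of_lt_of_le hj hp⟩, hj, rfl⟩

lemma sum_range_eq_sum_filter {M : ℕ} (f : ℕ → ℕ) {p : ℕ} (hp : p ≤ M) :
    ∑ i ∈ Finset.range p, f i
      = ∑ i ∈ Finset.univ.filter (fun i : Fin M => i.val < p), f i.val := by
  rw [← filter_image_val hp, Finset.sum_image (fun x _ y _ hxy => Fin.val_injective hxy)]

lemma card_filter_lt {M p : ℕ} (hp : p ≤ M) :
    (Finset.univ.filter (fun i : Fin M => i.val < p)).card = p := by
  rw [← Finset.card_image_of_injective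
    (Finset.univ.filter (fun i : Fin M => i.val < p)) Fin.val_injective,
    filter_image_val hp, Finset.card_range]

lemma pair_sum {m n h k : ℕ} (H : BipartiteHypertournament m n h k)
    (S_U : Finset (Fin m)) (S_V : Finset (Fin n)) :
    ∑ w ∈ pairSet S_U S_V, losingScore H w
      = ∑ u ∈ S_U, losingScore H (Sum.inl u) + ∑ v ∈ S_V, losingScore H (Sum.inr v) := by
  rw [pairSet, Finset.sum_union (by simp [Finset.disjoint_left]),
    Finset.sum_image (fun x _ y _ hxy => Sum.inl_injective hxy),
    Finset.sum_image (fun x _ y _ hxy => Sum.inr_injective hxy)]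

lemma forward_dir (m n h k : ℕ) (hh : 1 < h) (hm : h ≤ m) (hk : 1 < k) (hn : k ≤ n)
    (a b : ℕ → ℕ)
    (hL : IsLosingScoreLists m n h k a b) :
    (∀ p q, 1 ≤ p → p ≤ m → 1 ≤ q → q ≤ n →
        Nat.choose p h * Nat.choose q k ≤
          ∑ i ∈ Finset.range p, a i + ∑ j ∈ Finset.range q, b j) ∧
      ∑ i ∈ Finset.range m, a i + ∑ j ∈ Finset.range n, b j =
        Nat.choose m h * Nat.choose n k := by
  obtain ⟨H, σ, τ, hA, hB⟩ := hL
  have hm0 : 0 < m := by omega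
  have hh0 : 0 < h := by omega
  set d : Fin m ⊕ Fin n := Sum.inl ⟨0, hm0⟩ with hd
  have main : ∀ p q, p ≤ m → q ≤ n →
      ∃ (S_U : Finset (Fin m)) (S_V : Finset (Fin n)), S_U.card = p ∧ S_V.card = q ∧
        ∑ i ∈ Finset.range p, a i + ∑ j ∈ Finset.range q, b j
          = ∑ w ∈ pairSet S_U S_V, losingScore H w := by
    intro p q hp hq
    refine ⟨(Finset.univ.filter (fun i : Fin m => i.val < p)).image σ,
      (Finset.univ.filter (fun j : Fin n => j.val < q)).image τ, ?_, ?_, ?_⟩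
    · rw [Finset.card_image_of_injective _ σ.injective, card_filter_lt hp]
    · rw [Finset.card_image_of_injective _ τ.injective, card_filter_lt hq]
    · rw [pair_sum, sum_range_eq_sum_filter a hp, sum_range_eq_sum_filter b hq,
        Finset.sum_image (fun x _ y _ hxy => σ.injective hxy),
        Finset.sum_image (fun x _ y _ hxy => τ.injective hxy)]
      rw [Finset.sum_congr rfl (fun i _ => hA i), Finset.sum_congr rfl (fun j _ => hB j)]
  constructor
  · intro p q _ hp _ hq
    obtain ⟨S_U, S_V, hcU, hcV, hsum⟩ := main p q hp hq
    rw [hsum, ← hcU, ← hcV]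
    exact key_count H hh0 d S_U S_V
  · obtain ⟨S_U, S_V, hcU, hcV, hsum⟩ := main m n le_rfl le_rfl
    have hU : S_U = Finset.univ := Finset.eq_univ_of_card S_U (by rw [hcU]; simp)
    have hV : S_V = Finset.univ := Finset.eq_univ_of_card S_V (by rw [hcV]; simp)
    have hP : pairSet (Finset.univ : Finset (Fin m)) (Finset.univ : Finset (Fin n))
        = Finset.univ := by
      ext w; cases w <;> simp
    rw [hsum, hU, hV, hP, sum_losingScore H hh0 d,
      Finset.filter_true_of_mem (fun _ _ => Finset.mem_univ _), card_arcs]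
section Backward

lemma backward_dir (m n h k : ℕ) (hh : 1 < h) (hm : h ≤ m) (hk : 1 < k) (hn : k ≤ n)
    (a b : ℕ → ℕ)
    (ha : ∀ i j, i ≤ j → j < m → a i ≤ a j)
    (hb : ∀ i j, i ≤ j → j < n → b i ≤ b j)
    (hineq : ∀ p q, 1 ≤ p → p ≤ m → 1 ≤ q → q ≤ n →
        Nat.choose p h * Nat.choose q k ≤
          ∑ i ∈ Finset.range p, a i + ∑ j ∈ Finset.range q, b j)
    (htot : ∑ i ∈ Finset.range m, a i + ∑ j ∈ Finset.range n, b j =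
        Nat.choose m h * Nat.choose n k) :
    IsLosingScoreLists m n h k a b := by
  classical
  set cap : Fin m ⊕ Fin n → ℕ := Sum.elim (fun i => a i.val) (fun j => b j.val) with hcap
  set P : Finset (Finset (Fin m) × Finset (Fin n)) :=
    (Finset.univ.powersetCard h) ×ˢ (Finset.univ.powersetCard k) with hP
  have memP : ∀ x : {x // x ∈ P}, x.1.1.card = h ∧ x.1.2.card = k := by
    intro x
    have hx2 : x.1 ∈ (Finset.univ.powersetCard h : Finset (Finset (Fin m))) ×ˢ
        (Finset.univ.powersetCard k : Finset (Finset (Fin n))) := x.2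
    rw [Finset.mem_product, Finset.mem_powersetCard, Finset.mem_powersetCard] at hx2
    exact ⟨hx2.1.2, hx2.2.2⟩
  set cpy : (Fin m ⊕ Fin n) → Finset ((Fin m ⊕ Fin n) × ℕ) :=
    fun w => (Finset.range (cap w)).image (fun t => (w, t)) with hcpy
  set r : {x // x ∈ P} → Finset ((Fin m ⊕ Fin n) × ℕ) :=
    fun x => (pairSet x.1.1 x.1.2).biUnion cpy with hr
  have sum_cap : ∀ (S : Finset (Fin m ⊕ Fin n)),
      ∑ w ∈ S, cap w = ∑ u ∈ leftOf S, a u.val + ∑ v ∈ rightOf S, b v.val := by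
    intro S
    conv_lhs => rw [← pairSet_leftOf_rightOf S]
    rw [pairSet, Finset.sum_union (by simp [Finset.disjoint_left]),
      Finset.sum_image (fun x _ y _ hxy => Sum.inl_injective hxy),
      Finset.sum_image (fun x _ y _ hxy => Sum.inr_injective hxy)]
    simp [hcap]
  have cap_total : ∑ w : Fin m ⊕ Fin n, cap w = Nat.choose m h * Nat.choose n k := by
    rw [← htot, sum_cap Finset.univ]
    have l1 : leftOf (Finset.univ : Finset (Fin m ⊕ Fin n)) = Finset.univ := by ext; simp
    have l2 : rightOf (Finset.univ : Finset (Fin m ⊕ Fin n)) = Finset.univ := by ext; simp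
    rw [l1, l2, Fin.sum_univ_eq_sum_range (fun i => a i), Fin.sum_univ_eq_sum_range (fun j => b j)]
  have card_cpy : ∀ w, (cpy w).card = cap w := by
    intro w
    rw [hcpy, Finset.card_image_of_injective _ (fun s t hst => by simpa using hst),
      Finset.card_range]
  have hall : ∀ (T : Finset {x // x ∈ P}), T.card ≤ (T.biUnion r).card := by
    intro T
    set S : Finset (Fin m ⊕ Fin n) := T.biUnion (fun x => pairSet x.1.1 x.1.2) with hS
    have hTr : T.biUnion r = S.biUnion cpy := by
      ext z
      simp only [hr, hS, Finset.mem_biUnion]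
      constructor
      · rintro ⟨x, hx, w, hw, hz⟩
        exact ⟨w, ⟨x, hx, hw⟩, hz⟩
      · rintro ⟨w, ⟨x, hx, hw⟩, hz⟩
        exact ⟨x, hx, w, hw, hz⟩
    have hcard : (S.biUnion cpy).card = ∑ w ∈ S, cap w := by
      rw [Finset.card_biUnion]
      · exact Finset.sum_congr rfl (fun w _ => card_cpy w)
      · intro w1 _ w2 _ hne
        rw [Function.onFun, Finset.disjoint_left]
        intro z hz1 hz2
        simp only [hcpy] at hz1 hz2
        rw [Finset.mem_image] at hz1 hz2
        obtain ⟨t, _, ht⟩ := hz1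
        obtain ⟨t', _, ht'⟩ := hz2
        exact hne (congrArg Prod.fst (ht.trans ht'.symm))
    have hT2 : T.card ≤ Nat.choose (leftOf S).card h * Nat.choose (rightOf S).card k := by
      have hpc : ((leftOf S).powersetCard h ×ˢ (rightOf S).powersetCard k).card
          = Nat.choose (leftOf S).card h * Nat.choose (rightOf S).card k := by
        simp [Finset.card_powersetCard]
      rw [← hpc]
      apply Finset.card_le_card_of_injOn (f := fun x => x.1)
      · intro x hx
        simp only [Finset.mem_coe]
        rw [Finset.mem_product, Finset.mem_powersetCard, Finset.mem_powersetCard]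
        refine ⟨⟨?_, (memP x).1⟩, ?_, (memP x).2⟩
        · intro i hi
          rw [mem_leftOf, hS]
          exact Finset.mem_biUnion.mpr ⟨x, hx, by rw [mem_pairSet_inl]; exact hi⟩
        · intro j hj
          rw [mem_rightOf, hS]
          exact Finset.mem_biUnion.mpr ⟨x, hx, by rw [mem_pairSet_inr]; exact hj⟩
      · intro x _ y _ hxy
        exact Subtype.ext hxy
    have hmid : Nat.choose (leftOf S).card h * Nat.choose (rightOf S).card k
        ≤ ∑ w ∈ S, cap w := by
      by_cases hc : (leftOf S).card < h ∨ (rightOf S).card < k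
      · rcases hc with hc | hc
        · rw [Nat.choose_eq_zero_of_lt hc, Nat.zero_mul]; exact Nat.zero_le _
        · rw [Nat.choose_eq_zero_of_lt hc, Nat.mul_zero]; exact Nat.zero_le _
      · push_neg at hc
        have hu1 : (leftOf S).card ≤ m := by
          simpa using Finset.card_le_univ (leftOf S)
        have hu2 : (rightOf S).card ≤ n := by
          simpa using Finset.card_le_univ (rightOf S)
        calc Nat.choose (leftOf S).card h * Nat.choose (rightOf S).card k
            ≤ ∑ i ∈ Finset.range (leftOf S).card, a i
              + ∑ j ∈ Finset.range (rightOf S).card, b j :=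
              hineq _ _ (by omega) hu1 (by omega) hu2
          _ ≤ ∑ u ∈ leftOf S, a u.val + ∑ v ∈ rightOf S, b v.val :=
              Nat.add_le_add (sum_range_le_sum_subset ha _ rfl)
                (sum_range_le_sum_subset hb _ rfl)
          _ = ∑ w ∈ S, cap w := (sum_cap S).symm
    rw [hTr, hcard]
    exact le_trans hT2 hmid
  obtain ⟨f, finj, hf⟩ := (Finset.all_card_le_biUnion_card_iff_exists_injective r).mp hall
  set loser : {x // x ∈ P} → Fin m ⊕ Fin n := fun x => (f x).1 with hloser
  have hloser_mem : ∀ x, loser x ∈ pairSet x.1.1 x.1.2 ∧ (f x).2 < cap (loser x) := by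
    intro x
    have hfx := hf x
    simp only [hr] at hfx
    rw [Finset.mem_biUnion] at hfx
    obtain ⟨w, hw, hz⟩ := hfx
    simp only [hcpy] at hz
    rw [Finset.mem_image] at hz
    obtain ⟨t, ht, hz⟩ := hz
    have hw1 : loser x = w := by show (f x).1 = w; rw [← hz]
    have hw2 : (f x).2 = t := by rw [← hz]
    rw [hw1, hw2]
    exact ⟨hw, Finset.mem_range.mp ht⟩
  have fib_le : ∀ w, (Finset.univ.filter (fun x => loser x = w)).card ≤ cap w := by
    intro w
    rw [← Finset.card_range (cap w)]
    apply Finset.card_le_card_of_injOn (f := fun x => (f x).2)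
    · intro x hx
      rw [Finset.mem_coe, Finset.mem_filter] at hx
      rw [Finset.mem_coe, Finset.mem_range, ← hx.2]
      exact (hloser_mem x).2
    · intro x hx y hy hxy
      rw [Finset.mem_coe, Finset.mem_filter] at hx hy
      apply finj
      apply Prod.ext
      · exact hx.2.trans hy.2.symm
      · exact hxy
  have fib_sum : ∑ w : Fin m ⊕ Fin n, (Finset.univ.filter (fun x => loser x = w)).card
      = Nat.choose m h * Nat.choose n k := by
    rw [← Finset.card_eq_sum_card_fiberwise (fun x _ => Finset.mem_univ (loser x)),
      Finset.card_univ, Fintype.card_coe, hP]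
    simp [Finset.card_powersetCard]
  have fib_eq : ∀ w, (Finset.univ.filter (fun x => loser x = w)).card = cap w := by
    by_contra hcon
    push_neg at hcon
    obtain ⟨w0, hw0⟩ := hcon
    have hlt := Finset.sum_lt_sum (fun w (_ : w ∈ Finset.univ) => fib_le w)
      ⟨w0, Finset.mem_univ w0, lt_of_le_of_ne (fib_le w0) hw0⟩
    rw [fib_sum, cap_total] at hlt
    exact lt_irrefl _ hlt
  set arcFn : {x // x ∈ P} → List (Fin m ⊕ Fin n) :=
    fun x => ((pairSet x.1.1 x.1.2).erase (loser x)).toList ++ [loser x] with harcFn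
  have harc_toFinset : ∀ x, (arcFn x).toFinset = pairSet x.1.1 x.1.2 := by
    intro x
    show ((((pairSet x.1.1 x.1.2).erase (loser x)).toList ++ [loser x]).toFinset)
      = pairSet x.1.1 x.1.2
    rw [List.toFinset_append, Finset.toList_toFinset]
    show (pairSet x.1.1 x.1.2).erase (loser x) ∪ {loser x} = _
    rw [Finset.union_comm, ← Finset.insert_eq, Finset.insert_erase (hloser_mem x).1]
  have harc_nodup : ∀ x, (arcFn x).Nodup := by
    intro x
    show (((pairSet x.1.1 x.1.2).erase (loser x)).toList ++ [loser x]).Nodup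
    rw [List.nodup_append]
    refine ⟨Finset.nodup_toList _, List.nodup_singleton _, ?_⟩
    intro z hz y hy hzy
    rw [List.mem_singleton] at hy
    rw [hzy, hy] at hz
    rw [Finset.mem_toList] at hz
    exact (Finset.notMem_erase _ _) hz
  have harc_last : ∀ x, (arcFn x).getLast? = some (loser x) := by
    intro x
    show ((((pairSet x.1.1 x.1.2).erase (loser x)).toList) ++ [loser x]).getLast?
      = some (loser x)
    exact List.getLast?_concat
  have harc_left : ∀ x, ((arcFn x).filter (fun w => w.isLeft)).length = h := by
    intro x
    rw [← card_filter_toFinset (harc_nodup x), harc_toFinset, ← card_leftOf, leftOf_pairSet]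
    exact (memP x).1
  have harc_right : ∀ x, ((arcFn x).filter (fun w => w.isRight)).length = k := by
    intro x
    rw [← card_filter_toFinset (harc_nodup x), harc_toFinset, ← card_rightOf, rightOf_pairSet]
    exact (memP x).2
  have harc_inj : Function.Injective arcFn := by
    intro x y hxy
    have hps : pairSet x.1.1 x.1.2 = pairSet y.1.1 y.1.2 := by
      rw [← harc_toFinset, ← harc_toFinset, hxy]
    obtain ⟨e1, e2⟩ := pairSet_inj hps
    exact Subtype.ext (Prod.ext e1 e2)
  refine ⟨⟨Finset.univ.image arcFn, ?_, ?_, ?_, ?_⟩, 1, 1, ?_, ?_⟩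
  · intro e he
    obtain ⟨x, _, rfl⟩ := Finset.mem_image.mp he
    exact harc_nodup x
  · intro e he
    obtain ⟨x, _, rfl⟩ := Finset.mem_image.mp he
    exact harc_left x
  · intro e he
    obtain ⟨x, _, rfl⟩ := Finset.mem_image.mp he
    exact harc_right x
  · intro U₁ V₁ h1 h2
    have hmemP : ((U₁, V₁) : Finset (Fin m) × Finset (Fin n)) ∈ P := by
      rw [hP, Finset.mem_product]
      exact ⟨Finset.mem_powersetCard.mpr ⟨Finset.subset_univ _, h1⟩,
        Finset.mem_powersetCard.mpr ⟨Finset.subset_univ _, h2⟩⟩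
    refine ⟨arcFn ⟨(U₁, V₁), hmemP⟩,
      ⟨Finset.mem_image.mpr ⟨_, Finset.mem_univ _, rfl⟩, ?_⟩, ?_⟩
    · rw [harc_toFinset]
      rfl
    · rintro e' ⟨he'm, he't⟩
      obtain ⟨y, _, rfl⟩ := Finset.mem_image.mp he'm
      apply congrArg arcFn
      have hps : pairSet y.1.1 y.1.2 = pairSet U₁ V₁ := by
        rw [← harc_toFinset y]
        exact he't
      obtain ⟨e1, e2⟩ := pairSet_inj hps
      exact Subtype.ext (Prod.ext e1 e2)
  · intro i
    show a i.val = ((Finset.univ.image arcFn).filter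
      (fun e => e.getLast? = some (Sum.inl ((1 : Equiv.Perm (Fin m)) i)))).card
    rw [Finset.filter_image, Finset.card_image_of_injective _ harc_inj]
    have : ∀ x : {x // x ∈ P},
        ((arcFn x).getLast? = some (Sum.inl ((1 : Equiv.Perm (Fin m)) i)))
          ↔ loser x = Sum.inl i := by
      intro x
      rw [harc_last x]
      simp
    rw [Finset.filter_congr (fun x _ => this x), fib_eq]
    simp [hcap]
  · intro j
    show b j.val = ((Finset.univ.image arcFn).filter
      (fun e => e.getLast? = some (Sum.inr ((1 : Equiv.Perm (Fin n)) j)))).card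
    rw [Finset.filter_image, Finset.card_image_of_injective _ harc_inj]
    have : ∀ x : {x // x ∈ P},
        ((arcFn x).getLast? = some (Sum.inr ((1 : Equiv.Perm (Fin n)) j)))
          ↔ loser x = Sum.inr j := by
      intro x
      rw [harc_last x]
      simp
    rw [Finset.filter_congr (fun x _ => this x), fib_eq]
    simp [hcap]

end Backward

/-- Theorem 2.1: characterization of losing score lists of an [h-k]-bipartite
hypertournament. (Sequences are 0-indexed: `a 0, …, a (m-1)` are `a₁, …, a_m`.) -/
theorem losing_score_lists_iff (m n h k : ℕ) (hh : 1 < h) (hm : h ≤ m)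
    (hk : 1 < k) (hn : k ≤ n) (a b : ℕ → ℕ)
    (ha : ∀ i j, i ≤ j → j < m → a i ≤ a j)
    (hb : ∀ i j, i ≤ j → j < n → b i ≤ b j) :
    IsLosingScoreLists m n h k a b ↔
      ((∀ p q, 1 ≤ p → p ≤ m → 1 ≤ q → q ≤ n →
          Nat.choose p h * Nat.choose q k ≤
            ∑ i ∈ Finset.range p, a i + ∑ j ∈ Finset.range q, b j) ∧
        ∑ i ∈ Finset.range m, a i + ∑ j ∈ Finset.range n, b j =
          Nat.choose m h * Nat.choose n k) := by
  constructor
  · exact forward_dir m n h k hh hm hk hn a b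
  · rintro ⟨h1, h2⟩
    exact backward_dir m n h k hh hm hk hn a b ha hb h1 h2
end

section
/- If A = [a₁, a₂, ..., a_m] and B = [b₁, b₂, ..., b_n] are the losing score lists of some [h-k]-bipartite hypertournament (with m ≥ h > 1 and n ≥ k > 1), and if a_i < a_j for some indices i < j, then the sequence A' = [a₁, ..., a_i + 1, ..., a_j − 1, ..., a_m] together with B is again the pair of losing score lists of some [h-k]-bipartite hypertournament on vertex sets of sizes m and n. -/
set_option linter.unusedSectionVars false
set_option maxHeartbeats 1000000

section AuxLemmas

variable {α β : Type*} [DecidableEq α] [DecidableEq β]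

lemma my_length_filterMap_getLeft (l : List (α ⊕ β)) :
    (l.filterMap Sum.getLeft?).length = (l.filter (fun x => x.isLeft)).length := by
  induction l with
  | nil => rfl
  | cons x l ih => cases x <;> simp [List.filter_cons, List.filterMap_cons, ih]

lemma my_length_filterMap_getRight (l : List (α ⊕ β)) :
    (l.filterMap Sum.getRight?).length = (l.filter (fun x => x.isRight)).length := by
  induction l with
  | nil => rfl
  | cons x l ih => cases x <;> simp [List.filter_cons, List.filterMap_cons, ih]

lemma my_nodup_filterMap_getLeft {l : List (α ⊕ β)} (hl : l.Nodup) :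
    (l.filterMap Sum.getLeft?).Nodup := by
  refine hl.filterMap ?_
  intro a a' b hb hb'
  cases a <;> cases a' <;> simp_all

lemma my_nodup_filterMap_getRight {l : List (α ⊕ β)} (hl : l.Nodup) :
    (l.filterMap Sum.getRight?).Nodup := by
  refine hl.filterMap ?_
  intro a a' b hb hb'
  cases a <;> cases a' <;> simp_all

lemma my_toFinset_decomp (l : List (α ⊕ β)) :
    l.toFinset = (l.filterMap Sum.getLeft?).toFinset.image Sum.inl ∪
      (l.filterMap Sum.getRight?).toFinset.image Sum.inr := by
  ext x
  cases x <;> simp [List.mem_filterMap]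

lemma my_image_swap_self {γ : Type*} [DecidableEq γ] {a b : γ} {T : Finset γ}
    (ha : a ∈ T) (hb : b ∈ T) : T.image (Equiv.swap a b) = T := by
  ext x
  simp only [Finset.mem_image]
  constructor
  · rintro ⟨y, hy, rfl⟩
    rcases eq_or_ne y a with rfl | h1
    · rwa [Equiv.swap_apply_left]
    rcases eq_or_ne y b with rfl | h2
    · rwa [Equiv.swap_apply_right]
    · rwa [Equiv.swap_apply_of_ne_of_ne h1 h2]
  · intro hx
    refine ⟨Equiv.swap a b x, ?_, Equiv.swap_apply_self a b x⟩
    rcases eq_or_ne x a with rfl | h1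
    · rwa [Equiv.swap_apply_left]
    rcases eq_or_ne x b with rfl | h2
    · rwa [Equiv.swap_apply_right]
    · rwa [Equiv.swap_apply_of_ne_of_ne h1 h2]

lemma my_toFinset_map (f : α → β) (l : List α) :
    (l.map f).toFinset = l.toFinset.image f := by
  ext x
  simp

end AuxLemmas

section Tourn

variable {m n h k : ℕ} (H : BipartiteHypertournament m n h k)

lemma arc_decomp {e : List (Fin m ⊕ Fin n)} (he : e ∈ H.arcs) :
    (e.filterMap Sum.getLeft?).toFinset.card = h ∧
    (e.filterMap Sum.getRight?).toFinset.card = k ∧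
    e.toFinset = (e.filterMap Sum.getLeft?).toFinset.image Sum.inl ∪
      (e.filterMap Sum.getRight?).toFinset.image Sum.inr := by
  refine ⟨?_, ?_, my_toFinset_decomp e⟩
  · rw [List.toFinset_card_of_nodup (my_nodup_filterMap_getLeft (H.nodup e he)),
      my_length_filterMap_getLeft, H.left_count e he]
  · rw [List.toFinset_card_of_nodup (my_nodup_filterMap_getRight (H.nodup e he)),
      my_length_filterMap_getRight, H.right_count e he]

lemma arc_unique {e₁ e₂ : List (Fin m ⊕ Fin n)} (h₁ : e₁ ∈ H.arcs) (h₂ : e₂ ∈ H.arcs)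
    (hT : e₁.toFinset = e₂.toFinset) : e₁ = e₂ := by
  obtain ⟨hA, hB, hdec⟩ := arc_decomp H h₁
  obtain ⟨g, hg, hgu⟩ := H.complete _ _ hA hB
  exact (hgu e₁ ⟨h₁, hdec⟩).trans (hgu e₂ ⟨h₂, hT ▸ hdec⟩).symm

end Tourn

theorem exchange_aux {m n h k : ℕ} (hh : 0 < h) (H : BipartiteHypertournament m n h k)
    (u v : Fin m) (huv : u ≠ v)
    (hlt : losingScore H (Sum.inl u) < losingScore H (Sum.inl v)) :
    ∃ H' : BipartiteHypertournament m n h k,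
      losingScore H' (Sum.inl u) = losingScore H (Sum.inl u) + 1 ∧
      losingScore H' (Sum.inl v) = losingScore H (Sum.inl v) - 1 ∧
      ∀ w, w ≠ Sum.inl u → w ≠ Sum.inl v → losingScore H' w = losingScore H w := by
  classical
  set φ : Equiv.Perm (Fin m ⊕ Fin n) := Equiv.swap (Sum.inl u) (Sum.inl v) with hφ
  have hiuv : (Sum.inl u : Fin m ⊕ Fin n) ≠ Sum.inl v := by simpa using huv
  have hφu : φ (Sum.inl u) = Sum.inl v := Equiv.swap_apply_left _ _
  have hφv : φ (Sum.inl v) = Sum.inl u := Equiv.swap_apply_right _ _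
  have hφother : ∀ x : Fin m ⊕ Fin n, x ≠ Sum.inl u → x ≠ Sum.inl v → φ x = x :=
    fun x h1 h2 => Equiv.swap_apply_of_ne_of_ne h1 h2
  have hφφT : ∀ T : Finset (Fin m ⊕ Fin n), (T.image φ).image φ = T := by
    intro T
    rw [Finset.image_image]
    have : (⇑φ ∘ ⇑φ) = id := funext fun x => Equiv.swap_apply_self _ _ x
    rw [this, Finset.image_id]
  -- arcs are nonempty
  have hne : ∀ g ∈ H.arcs, g ≠ [] := by
    intro g hg hgnil
    have := H.left_count g hg
    rw [hgnil] at this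
    simp at this
    omega
  have hlast : ∀ g ∈ H.arcs, ∃ x, g.getLast? = some x := by
    intro g hg
    exact Option.isSome_iff_exists.mp (List.getLast?_isSome.mpr (hne g hg))
  -- canonical image under φ
  have himcan : ∀ (U₁ : Finset (Fin m)) (V₁ : Finset (Fin n)),
      (U₁.image Sum.inl ∪ V₁.image Sum.inr).image φ
        = (U₁.image (Equiv.swap u v)).image Sum.inl ∪ V₁.image Sum.inr := by
    intro U₁ V₁
    have hphil : ∀ x : Fin m, φ (Sum.inl x) = Sum.inl (Equiv.swap u v x) := by
      intro x
      rcases eq_or_ne x u with rfl | h1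
      · rw [hφu, Equiv.swap_apply_left]
      rcases eq_or_ne x v with rfl | h2
      · rw [hφv, Equiv.swap_apply_right]
      · rw [hφother _ (by simpa) (by simpa), Equiv.swap_apply_of_ne_of_ne h1 h2]
    have hc1 : (⇑φ ∘ (Sum.inl : Fin m → Fin m ⊕ Fin n)) = (Sum.inl ∘ ⇑(Equiv.swap u v)) :=
      funext hphil
    have hc2 : (⇑φ ∘ (Sum.inr : Fin n → Fin m ⊕ Fin n)) = Sum.inr :=
      funext fun y => hφother _ (by simp) (by simp)
    rw [Finset.image_union, Finset.image_image, Finset.image_image, Finset.image_image, hc1, hc2]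
  -- partner arcs exist
  have hpartner : ∀ g ∈ H.arcs, ∃ f ∈ H.arcs, f.toFinset = g.toFinset.image φ := by
    intro g hg
    obtain ⟨hA, hB, hdec⟩ := arc_decomp H hg
    obtain ⟨f, hf, -⟩ := H.complete ((g.filterMap Sum.getLeft?).toFinset.image (Equiv.swap u v)) _
      (by rw [Finset.card_image_of_injective _ (Equiv.injective _)]; exact hA) hB
    exact ⟨f, hf.1, by rw [hf.2, hdec, himcan]⟩
  -- key existence of a good pair (e, f)
  have hkey : ∃ e ∈ H.arcs, e.getLast? = some (Sum.inl v) ∧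
      ∃ f ∈ H.arcs, f.toFinset = e.toFinset.image φ ∧ f.getLast? ≠ some (Sum.inl u) := by
    by_contra hcon
    push_neg at hcon
    have hle : losingScore H (Sum.inl v) ≤ losingScore H (Sum.inl u) := by
      unfold losingScore
      apply Finset.card_le_card_of_injOn
        (fun g => if hg : ∃ f ∈ H.arcs, f.toFinset = g.toFinset.image φ then hg.choose else [])
      · intro g hg
        rw [Finset.mem_coe, Finset.mem_filter] at hg
        have hp := hpartner g hg.1
        beta_reduce
        rw [dif_pos hp]
        have hs := hp.choose_spec
        exact Finset.mem_filter.mpr ⟨hs.1, hcon g hg.1 hg.2 hp.choose hs.1 hs.2⟩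
      · intro g1 hg1 g2 hg2 hF
        rw [Finset.mem_coe, Finset.mem_filter] at hg1 hg2
        have hp1 := hpartner g1 hg1.1
        have hp2 := hpartner g2 hg2.1
        beta_reduce at hF
        rw [dif_pos hp1, dif_pos hp2] at hF
        have hTT : g1.toFinset.image φ = g2.toFinset.image φ := by
          rw [← hp1.choose_spec.2, ← hp2.choose_spec.2, hF]
        have := congrArg (Finset.image φ) hTT
        rw [hφφT, hφφT] at this
        exact arc_unique H hg1.1 hg2.1 this
    omega
  obtain ⟨e, he, helast, f, hf, hfset, hflast⟩ := hkey
  have hveT : Sum.inl v ∈ e.toFinset :=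
    List.mem_toFinset.mpr (List.mem_of_getLast? helast)
  -- if f ≠ e then inl u ∉ e
  have hef_ne : f ≠ e → Sum.inl u ∉ e.toFinset := by
    intro hfe hu
    apply hfe
    apply arc_unique H hf he
    rw [hfset, hφ]
    exact my_image_swap_self hu hveT
  have hflast_v : f ≠ e → f.getLast? ≠ some (Sum.inl v) := by
    intro hfe hcontra
    have hmem : Sum.inl v ∈ f.toFinset :=
      List.mem_toFinset.mpr (List.mem_of_getLast? hcontra)
    rw [hfset] at hmem
    obtain ⟨y, hy, hyx⟩ := Finset.mem_image.mp hmem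
    have hyu : y = Sum.inl u := φ.injective (by rw [hφu]; exact hyx)
    exact hef_ne hfe (hyu ▸ hy)
  -- the modification map
  set Φ : List (Fin m ⊕ Fin n) → List (Fin m ⊕ Fin n) :=
    fun g => if g = e ∨ g = f then g.map φ else g with hΦdef
  have hΦe : Φ e = e.map φ := if_pos (Or.inl rfl)
  have hΦf : Φ f = f.map φ := if_pos (Or.inr rfl)
  have hΦg : ∀ g, g ≠ e → g ≠ f → Φ g = g := by
    intro g h1 h2
    exact if_neg (by tauto)
  have hfe_set : e.toFinset = f.toFinset.image φ := by
    rw [hfset, hφφT]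
  have hTΦ : ∀ g, g ∈ H.arcs →
      (Φ g).toFinset = if g = e then f.toFinset else if g = f then e.toFinset else g.toFinset := by
    intro g hg
    by_cases h1 : g = e
    · subst h1
      rw [if_pos rfl, hΦe, my_toFinset_map, ← hfset]
    by_cases h2 : g = f
    · subst h2
      rw [if_neg h1, if_pos rfl, hΦf, my_toFinset_map, ← hfe_set]
    · rw [if_neg h1, if_neg h2, hΦg g h1 h2]
  -- injectivity on toFinsets
  have haux : ∀ g₁ ∈ H.arcs, ∀ g₂ ∈ H.arcs, (Φ g₁).toFinset = (Φ g₂).toFinset → g₁ = g₂ := by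
    intro g₁ hg₁ g₂ hg₂ hT
    rw [hTΦ g₁ hg₁, hTΦ g₂ hg₂] at hT
    by_cases h1 : g₁ = e
    · rw [if_pos h1] at hT
      by_cases h3 : g₂ = e
      · rw [h1, h3]
      by_cases h4 : g₂ = f
      · rw [if_neg h3, if_pos h4] at hT
        rw [h1, h4]
        exact arc_unique H he hf hT.symm
      · rw [if_neg h3, if_neg h4] at hT
        exact absurd (arc_unique H hf hg₂ hT) (fun hh' => h4 hh'.symm)
    by_cases h2 : g₁ = f
    · rw [if_neg h1, if_pos h2] at hT
      by_cases h3 : g₂ = e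
      · rw [if_pos h3] at hT
        rw [h2, h3]
        exact arc_unique H hf he hT.symm
      by_cases h4 : g₂ = f
      · rw [h2, h4]
      · rw [if_neg h3, if_neg h4] at hT
        exact absurd (arc_unique H he hg₂ hT) (fun hh' => h3 hh'.symm)
    · rw [if_neg h1, if_neg h2] at hT
      by_cases h3 : g₂ = e
      · rw [if_pos h3] at hT
        exact absurd (arc_unique H hg₁ hf hT) h2
      by_cases h4 : g₂ = f
      · rw [if_neg h3, if_pos h4] at hT
        exact absurd (arc_unique H hg₁ he hT) h1
      · rw [if_neg h3, if_neg h4] at hT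
        exact arc_unique H hg₁ hg₂ hT
  -- last entries of modified arcs
  have hlastΦe : (Φ e).getLast? = some (Sum.inl u) := by
    rw [hΦe, List.getLast?_map, helast, Option.map_some, hφv]
  have hlastΦf : f ≠ e → (Φ f).getLast? = f.getLast? := by
    intro hfe
    obtain ⟨x, hx⟩ := hlast f hf
    have hxu : x ≠ Sum.inl u := fun hxx => hflast (hxx ▸ hx)
    have hxv : x ≠ Sum.inl v := fun hxx => hflast_v hfe (hxx ▸ hx)
    rw [hΦf, List.getLast?_map, hx, Option.map_some, hφother x hxu hxv]
  have hΦcases : ∀ g, Φ g = g.map φ ∨ Φ g = g := by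
    intro g
    by_cases h1 : g = e ∨ g = f
    · exact Or.inl (if_pos h1)
    · exact Or.inr (if_neg h1)
  -- counting lemma for filters
  have hscoreAux : ∀ w : Fin m ⊕ Fin n,
      (Finset.filter (fun e' => e'.getLast? = some w) (H.arcs.image Φ)).card
        = (H.arcs.filter (fun g => (Φ g).getLast? = some w)).card := by
    intro w
    rw [Finset.filter_image]
    apply Finset.card_image_of_injOn
    intro g₁ hg₁ g₂ hg₂ hF
    rw [Finset.mem_coe, Finset.mem_filter] at hg₁ hg₂
    exact haux g₁ hg₁.1 g₂ hg₂.1 (by rw [hF])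
  refine ⟨⟨H.arcs.image Φ, ?_, ?_, ?_, ?_⟩, ?_, ?_, ?_⟩
  · -- nodup
    intro e' he'
    obtain ⟨g, hg, rfl⟩ := Finset.mem_image.mp he'
    rcases hΦcases g with hc | hc <;> rw [hc]
    · exact (H.nodup g hg).map φ.injective
    · exact H.nodup g hg
  · -- left_count
    intro e' he'
    obtain ⟨g, hg, rfl⟩ := Finset.mem_image.mp he'
    rcases hΦcases g with hc | hc <;> rw [hc]
    · rw [← H.left_count g hg, ← List.countP_eq_length_filter, ← List.countP_eq_length_filter,
        List.countP_map]
      congr 1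
      funext x
      show ((φ x).isLeft : Bool) = x.isLeft
      rcases eq_or_ne x (Sum.inl u) with rfl | h1
      · simp [hφu]
      rcases eq_or_ne x (Sum.inl v) with rfl | h2
      · simp [hφv]
      · simp [hφother x h1 h2]
    · exact H.left_count g hg
  · -- right_count
    intro e' he'
    obtain ⟨g, hg, rfl⟩ := Finset.mem_image.mp he'
    rcases hΦcases g with hc | hc <;> rw [hc]
    · rw [← H.right_count g hg, ← List.countP_eq_length_filter, ← List.countP_eq_length_filter,
        List.countP_map]
      congr 1
      funext x
      show ((φ x).isRight : Bool) = x.isRight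
      rcases eq_or_ne x (Sum.inl u) with rfl | h1
      · simp [hφu]
      rcases eq_or_ne x (Sum.inl v) with rfl | h2
      · simp [hφv]
      · simp [hφother x h1 h2]
    · exact H.right_count g hg
  · -- complete
    intro U₁ V₁ hU hV
    obtain ⟨g₀, hg₀, -⟩ := H.complete U₁ V₁ hU hV
    have huniq : ∀ w ∈ H.arcs,
        (Φ w).toFinset = U₁.image Sum.inl ∪ V₁.image Sum.inr →
        ∀ y, (y ∈ H.arcs.image Φ ∧ y.toFinset = U₁.image Sum.inl ∪ V₁.image Sum.inr) → y = Φ w := by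
      intro w hw hTw y hy
      obtain ⟨gy, hgy, rfl⟩ := Finset.mem_image.mp hy.1
      rw [haux gy hgy w hw (by rw [hy.2, hTw])]
    by_cases hc1 : g₀ = f
    · have hTe : (Φ e).toFinset = U₁.image Sum.inl ∪ V₁.image Sum.inr := by
        rw [hTΦ e he, if_pos rfl, ← hc1, hg₀.2]
      exact ⟨Φ e, ⟨Finset.mem_image_of_mem Φ he, hTe⟩, huniq e he hTe⟩
    by_cases hc2 : g₀ = e
    · have hTf : (Φ f).toFinset = U₁.image Sum.inl ∪ V₁.image Sum.inr := by
        rw [hTΦ f hf]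
        by_cases hfe : f = e
        · rw [if_pos hfe, hfe, ← hc2, hg₀.2]
        · rw [if_neg hfe, if_pos rfl, ← hc2, hg₀.2]
      exact ⟨Φ f, ⟨Finset.mem_image_of_mem Φ hf, hTf⟩, huniq f hf hTf⟩
    · have hTg : (Φ g₀).toFinset = U₁.image Sum.inl ∪ V₁.image Sum.inr := by
        rw [hTΦ g₀ hg₀.1, if_neg hc2, if_neg hc1, hg₀.2]
      exact ⟨Φ g₀, ⟨Finset.mem_image_of_mem Φ hg₀.1, hTg⟩, huniq g₀ hg₀.1 hTg⟩
  · -- score at u goes up by one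
    simp only [losingScore]
    rw [hscoreAux]
    have hset : H.arcs.filter (fun g => (Φ g).getLast? = some (Sum.inl u))
        = insert e (H.arcs.filter (fun g => g.getLast? = some (Sum.inl u))) := by
      ext g
      simp only [Finset.mem_filter, Finset.mem_insert]
      constructor
      · rintro ⟨hg, hlg⟩
        by_cases h1 : g = e
        · exact Or.inl h1
        by_cases h2 : g = f
        · have hfe : f ≠ e := by rw [← h2]; exact h1
          rw [h2, hlastΦf hfe] at hlg
          exact absurd hlg hflast
        · rw [hΦg g h1 h2] at hlg
          exact Or.inr ⟨hg, hlg⟩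
      · rintro (rfl | ⟨hg, hlg⟩)
        · exact ⟨he, hlastΦe⟩
        · have h1 : g ≠ e := by
            rintro rfl
            rw [helast] at hlg
            exact hiuv (Option.some.inj hlg).symm
          have h2 : g ≠ f := by
            rintro rfl
            exact hflast hlg
          exact ⟨hg, by rw [hΦg g h1 h2]; exact hlg⟩
    rw [hset, Finset.card_insert_of_notMem]
    intro hmem
    rw [Finset.mem_filter, helast] at hmem
    exact hiuv (Option.some.inj hmem.2).symm
  · -- score at v goes down by one
    simp only [losingScore]
    rw [hscoreAux]
    have hset : H.arcs.filter (fun g => (Φ g).getLast? = some (Sum.inl v))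
        = (H.arcs.filter (fun g => g.getLast? = some (Sum.inl v))).erase e := by
      ext g
      simp only [Finset.mem_filter, Finset.mem_erase]
      constructor
      · rintro ⟨hg, hlg⟩
        by_cases h1 : g = e
        · rw [h1, hlastΦe] at hlg
          exact absurd (Option.some.inj hlg) hiuv
        by_cases h2 : g = f
        · have hfe : f ≠ e := by rw [← h2]; exact h1
          rw [h2, hlastΦf hfe] at hlg
          exact absurd hlg (hflast_v hfe)
        · rw [hΦg g h1 h2] at hlg
          exact ⟨h1, hg, hlg⟩
      · rintro ⟨h1, hg, hlg⟩
        have h2 : g ≠ f := by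
          rintro rfl
          first
          | exact hflast_v h1 hlg
          | exact hflast_v (fun hq => h1 hq) hlg
        exact ⟨hg, by rw [hΦg g h1 h2]; exact hlg⟩
    rw [hset, Finset.card_erase_of_mem]
    rw [Finset.mem_filter]
    exact ⟨he, helast⟩
  · -- other scores unchanged
    intro w hwu hwv
    simp only [losingScore]
    rw [hscoreAux]
    congr 1
    ext g
    simp only [Finset.mem_filter]
    constructor
    · rintro ⟨hg, hlg⟩
      by_cases h1 : g = e
      · rw [h1, hlastΦe] at hlg
        exact absurd (Option.some.inj hlg).symm hwu
      by_cases h2 : g = f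
      · have hfe : f ≠ e := by rw [← h2]; exact h1
        rw [h2, hlastΦf hfe] at hlg
        exact ⟨hg, by rw [h2]; exact hlg⟩
      · rw [hΦg g h1 h2] at hlg
        exact ⟨hg, hlg⟩
    · rintro ⟨hg, hlg⟩
      by_cases h1 : g = e
      · rw [h1, helast] at hlg
        exact absurd (Option.some.inj hlg).symm hwv
      by_cases h2 : g = f
      · have hfe : f ≠ e := by rw [← h2]; exact h1
        refine ⟨hg, ?_⟩
        rw [h2, hlastΦf hfe, ← h2]
        exact hlg
      · exact ⟨hg, by rw [hΦg g h1 h2]; exact hlg⟩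

/-- Lemma 2.2: if `a`, `b` are the losing score lists of an [h-k]-bipartite
hypertournament and `a i < a j` with `i < j`, then the lists obtained by replacing
`a i` by `a i + 1` and `a j` by `a j - 1` are again losing score lists of some
[h-k]-bipartite hypertournament. (Sequences are 0-indexed.) -/
theorem losing_score_lists_exchange (m n h k : ℕ) (hh : 1 < h) (hm : h ≤ m)
    (hk : 1 < k) (hn : k ≤ n) (a b : ℕ → ℕ)
    (ha : ∀ i j, i ≤ j → j < m → a i ≤ a j)
    (hb : ∀ i j, i ≤ j → j < n → b i ≤ b j)
    (hab : IsLosingScoreLists m n h k a b)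
    (i j : ℕ) (hij : i < j) (hjm : j < m) (haij : a i < a j) :
    IsLosingScoreLists m n h k
      (fun t => if t = i then a i + 1 else if t = j then a j - 1 else a t) b := by
  classical
  obtain ⟨H, σ, τ, hA, hB⟩ := hab
  have him : i < m := lt_trans hij hjm
  have hiFjF : (⟨i, him⟩ : Fin m) ≠ ⟨j, hjm⟩ := by
    intro hq
    have := congrArg Fin.val hq
    simp at this
    omega
  have huv : σ ⟨i, him⟩ ≠ σ ⟨j, hjm⟩ := fun hq => hiFjF (σ.injective hq)
  have h1 : a i = losingScore H (Sum.inl (σ ⟨i, him⟩)) := hA ⟨i, him⟩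
  have h2 : a j = losingScore H (Sum.inl (σ ⟨j, hjm⟩)) := hA ⟨j, hjm⟩
  have hlt : losingScore H (Sum.inl (σ ⟨i, him⟩)) < losingScore H (Sum.inl (σ ⟨j, hjm⟩)) := by
    omega
  obtain ⟨H', hs1, hs2, hs3⟩ := exchange_aux (by omega) H _ _ huv hlt
  refine ⟨H', σ, τ, ?_, ?_⟩
  · intro t
    show (if (t : ℕ) = i then a i + 1 else if (t : ℕ) = j then a j - 1 else a t) = _
    by_cases ht1 : (t : ℕ) = i
    · rw [if_pos ht1]
      have htF : t = ⟨i, him⟩ := Fin.ext ht1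
      rw [htF, hs1]
      omega
    by_cases ht2 : (t : ℕ) = j
    · rw [if_neg ht1, if_pos ht2]
      have htF : t = ⟨j, hjm⟩ := Fin.ext ht2
      rw [htF, hs2]
      omega
    · have hne1 : (Sum.inl (σ t) : Fin m ⊕ Fin n) ≠ Sum.inl (σ ⟨i, him⟩) := by
        intro hq
        exact ht1 (congrArg Fin.val (σ.injective (Sum.inl.inj hq)))
      have hne2 : (Sum.inl (σ t) : Fin m ⊕ Fin n) ≠ Sum.inl (σ ⟨j, hjm⟩) := by
        intro hq
        exact ht2 (congrArg Fin.val (σ.injective (Sum.inl.inj hq)))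
      rw [if_neg ht1, if_neg ht2, hs3 _ hne1 hne2]
      exact hA t
  · intro t
    rw [hB t]
    exact (hs3 _ (by simp) (by simp)).symm
end

section
/- Given positive integers m and n, a pair of non-decreasing sequences A = [a₁, a₂, ..., a_m] and B = [b₁, b₂, ..., b_n] of non-negative integers is the pair of losing score lists of some bipartite tournament on vertex sets of sizes m and n if and only if for every p with 1 ≤ p ≤ m and every q with 1 ≤ q ≤ n, ∑_{i=1}^{p} a_i + ∑_{j=1}^{q} b_j ≥ p·q, with equality when p = m and q = n. -/
/-- A bipartite tournament on vertex sets `Fin m` and `Fin n` is an orientation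
of the complete bipartite graph: `o u v = true` means the arc `u → v` is present,
and `o u v = false` means the arc `v → u` is present. -/
def losingScoreU {m n : ℕ} (o : Fin m → Fin n → Bool) (u : Fin m) : ℕ :=
  (Finset.univ.filter (fun v : Fin n => o u v = false)).card

/-- The losing score (in-degree) of a vertex `v ∈ V` in the bipartite tournament
given by the orientation `o`. -/
def losingScoreV {m n : ℕ} (o : Fin m → Fin n → Bool) (v : Fin n) : ℕ :=
  (Finset.univ.filter (fun u : Fin m => o u v = true)).card

/-- `a` (on indices `< m`) and `b` (on indices `< n`) list, up to order, the losing
scores (in-degrees) of the vertices of `U` and of `V` in some bipartite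
tournament. -/
def IsBipartiteLosingScoreLists (m n : ℕ) (a b : ℕ → ℕ) : Prop :=
  ∃ (o : Fin m → Fin n → Bool) (σ : Equiv.Perm (Fin m)) (τ : Equiv.Perm (Fin n)),
    (∀ i : Fin m, a i.val = losingScoreU o (σ i)) ∧
    (∀ j : Fin n, b j.val = losingScoreV o (τ j))

lemma sum_scores {m n : ℕ} (o : Fin m → Fin n → Bool) (S : Finset (Fin m)) (T : Finset (Fin n)) :
    S.card * T.card ≤ ∑ u ∈ S, losingScoreU o u + ∑ v ∈ T, losingScoreV o v := by
  have h1 : ∀ u ∈ S, (T.filter (fun v => o u v = false)).card ≤ losingScoreU o u := by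
    intro u _
    exact Finset.card_le_card (Finset.filter_subset_filter _ (Finset.subset_univ T))
  have h2 : ∀ v ∈ T, (S.filter (fun u => o u v = true)).card ≤ losingScoreV o v := by
    intro v _
    exact Finset.card_le_card (Finset.filter_subset_filter _ (Finset.subset_univ S))
  have key : S.card * T.card =
      ∑ u ∈ S, (T.filter (fun v => o u v = false)).card
      + ∑ v ∈ T, (S.filter (fun u => o u v = true)).card := by
    calc S.card * T.card = ∑ u ∈ S, ∑ v ∈ T, (1 : ℕ) := by
          simp [Finset.sum_const, mul_comm]
      _ = ∑ u ∈ S, ∑ v ∈ T,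
            (((if o u v = false then 1 else 0) : ℕ) + (if o u v = true then 1 else 0)) :=
          Finset.sum_congr rfl (fun u _ => Finset.sum_congr rfl (fun v _ => by
            cases o u v <;> simp))
      _ = (∑ u ∈ S, ∑ v ∈ T, ((if o u v = false then 1 else 0) : ℕ))
            + ∑ u ∈ S, ∑ v ∈ T, ((if o u v = true then 1 else 0) : ℕ) := by
          rw [← Finset.sum_add_distrib]
          exact Finset.sum_congr rfl (fun u _ => Finset.sum_add_distrib)
      _ = _ := by
          congr 1
          · simp only [Finset.card_filter]
          · simp only [Finset.card_filter]; exact Finset.sum_comm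
  rw [key]
  exact Nat.add_le_add (Finset.sum_le_sum h1) (Finset.sum_le_sum h2)


lemma total_scores {m n : ℕ} (o : Fin m → Fin n → Bool) :
    ∑ u : Fin m, losingScoreU o u + ∑ v : Fin n, losingScoreV o v = m * n := by
  have key : (Finset.univ : Finset (Fin m)).card * (Finset.univ : Finset (Fin n)).card =
      ∑ u : Fin m, losingScoreU o u + ∑ v : Fin n, losingScoreV o v := by
    calc (Finset.univ : Finset (Fin m)).card * (Finset.univ : Finset (Fin n)).card
        = ∑ u : Fin m, ∑ v : Fin n, (1 : ℕ) := by simp [Finset.sum_const, mul_comm]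
      _ = ∑ u : Fin m, ∑ v : Fin n,
            (((if o u v = false then 1 else 0) : ℕ) + (if o u v = true then 1 else 0)) :=
          Finset.sum_congr rfl (fun u _ => Finset.sum_congr rfl (fun v _ => by
            cases o u v <;> simp))
      _ = (∑ u : Fin m, ∑ v : Fin n, ((if o u v = false then 1 else 0) : ℕ))
            + ∑ u : Fin m, ∑ v : Fin n, ((if o u v = true then 1 else 0) : ℕ) := by
          rw [← Finset.sum_add_distrib]
          exact Finset.sum_congr rfl (fun u _ => Finset.sum_add_distrib)
      _ = _ := by
          congr 1
          · simp only [losingScoreU, Finset.card_filter]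
          · simp only [losingScoreV, Finset.card_filter]; exact Finset.sum_comm
  simpa using key.symm

lemma extend_orientation {m n : ℕ} (o' : Fin m → Fin n → Bool) (g : ℕ → Bool) :
    ∃ o : Fin m → Fin (n + 1) → Bool,
      (∀ i : Fin m, losingScoreU o i = losingScoreU o' i + (if g i.val then 1 else 0)) ∧
      (∀ j : Fin n, losingScoreV o j.castSucc = losingScoreV o' j) ∧
      losingScoreV o (Fin.last n)
        = (Finset.univ.filter (fun i : Fin m => g i.val = false)).card := by
  refine ⟨fun i j => if h : (j : ℕ) < n then o' i ⟨j, h⟩ else !(g i.val), ?_, ?_, ?_⟩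
  · intro i
    rw [losingScoreU, Finset.card_filter, Fin.sum_univ_castSucc]
    have h1 : ∀ j : Fin n,
        ((if h : ((j.castSucc : Fin (n+1)) : ℕ) < n then o' i ⟨(j.castSucc : Fin (n+1)), h⟩
          else !(g i.val)) : Bool) = o' i j := by
      intro j
      rw [dif_pos (by simp [Fin.is_lt] : ((j.castSucc : Fin (n+1)) : ℕ) < n)]
      exact congrArg (o' i) (Fin.ext (by simp))
    have h2 : ∑ j : Fin n, (if ((if h : ((j.castSucc : Fin (n+1)) : ℕ) < n
          then o' i ⟨(j.castSucc : Fin (n+1)), h⟩ else !(g i.val)) : Bool) = false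
          then 1 else 0)
        = losingScoreU o' i := by
      rw [losingScoreU, Finset.card_filter]
      exact Finset.sum_congr rfl (fun j _ => by rw [h1 j])
    rw [h2]
    congr 1
    have : ¬ (((Fin.last n) : ℕ) < n) := by simp
    rw [dif_neg this]
    cases hg : g i.val <;> simp
  · intro j
    rw [losingScoreV, losingScoreV]
    congr 1
    apply Finset.filter_congr
    intro i _
    rw [dif_pos (by simp [Fin.is_lt] : ((j.castSucc : Fin (n+1)) : ℕ) < n)]
    rw [congrArg (o' i) (Fin.ext (by simp) : (⟨((j.castSucc : Fin (n+1)) : ℕ), by simp [Fin.is_lt]⟩ : Fin n) = j)]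
  · rw [losingScoreV]
    congr 1
    apply Finset.filter_congr
    intro i _
    have : ¬ (((Fin.last n) : ℕ) < n) := by simp
    rw [dif_neg this]
    cases hg : g i.val <;> simp

lemma exists_orientation : ∀ (n m : ℕ) (a b : ℕ → ℕ),
    (∀ i j, i ≤ j → j < m → a i ≤ a j) →
    (∀ i j, i ≤ j → j < n → b i ≤ b j) →
    (∀ p q, 1 ≤ p → p ≤ m → 1 ≤ q → q ≤ n →
      p * q ≤ ∑ i ∈ Finset.range p, a i + ∑ j ∈ Finset.range q, b j) →
    (∑ i ∈ Finset.range m, a i + ∑ j ∈ Finset.range n, b j = m * n) →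
    ∃ o : Fin m → Fin n → Bool,
      (∀ i : Fin m, losingScoreU o i = a i.val) ∧
      (∀ j : Fin n, losingScoreV o j = b j.val) := by
  intro n
  induction n with
  | zero =>
    intro m a b ha hb hC hE
    refine ⟨fun i j => j.elim0, ?_, fun j => j.elim0⟩
    intro i
    have h0 : ∑ i ∈ Finset.range m, a i = 0 := by simpa using hE
    have hai : a i.val = 0 := Finset.sum_eq_zero_iff.mp h0 i.val (Finset.mem_range.mpr i.isLt)
    simp [losingScoreU, hai]
  | succ n IH =>
    intro m a b ha hb hC hE
    have hb' : ∀ i j, i ≤ j → j < n → b i ≤ b j := fun i j h1 h2 => hb i j h1 (by omega)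
    have hE' : ∑ i ∈ Finset.range m, a i + (∑ j ∈ Finset.range n, b j + b n) = m * (n + 1) := by
      rw [← Finset.sum_range_succ]; exact hE
    have hmul0 : m * (n + 1) = m * n + m := by ring
    have hβm : b n ≤ m := by
      rcases Nat.eq_zero_or_pos m with hm0 | hm
      · subst hm0
        have : ∑ j ∈ Finset.range (n + 1), b j = 0 := by simpa using hE
        have := Finset.sum_eq_zero_iff.mp this n (Finset.mem_range.mpr (Nat.lt_succ_self n))
        omega
      · rcases Nat.eq_zero_or_pos n with hn0 | hn
        · subst hn0
          simp only [Finset.range_zero, Finset.sum_empty, Nat.zero_add, Nat.mul_one] at hE'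
          omega
        · have h1 := hC m n hm le_rfl hn (Nat.le_succ n)
          linarith
    rcases eq_or_lt_of_le hβm with hcase | hcase
    · -- b n = m : nobody beats the last vertex of V
      obtain ⟨o', hU', hV'⟩ := IH m a b ha hb'
        (fun p q hp hpm hq hqn => hC p q hp hpm hq (by omega))
        (by linarith)
      obtain ⟨o, hoU, hoV, hoLast⟩ := extend_orientation o' (fun _ => false)
      refine ⟨o, ?_, ?_⟩
      · intro i; rw [hoU i, hU' i]; simp
      · intro j
        refine Fin.lastCases ?_ (fun j' => ?_) j
        · rw [hoLast, Fin.val_last]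
          simp [hcase]
        · rw [hoV j', hV' j', Fin.coe_castSucc]
    · -- b n < m
      have hm1 : 1 ≤ m := by omega
      have hPex : ∃ i, a (b n) ≤ a i := ⟨b n, le_rfl⟩
      set s := Nat.find hPex with hs_def
      have hs_le : s ≤ b n := Nat.find_min' hPex le_rfl
      have hs_lt : ∀ i, i < s → a i < a (b n) := fun i hi =>
        Nat.lt_of_not_le (Nat.find_min hPex hi)
      have hs_spec : a (b n) ≤ a s := Nat.find_spec hPex
      set e := Nat.findGreatest (fun i => a i ≤ a (b n)) (m - 1) with he_def
      have he_ge : b n ≤ e := Nat.le_findGreatest (by omega) le_rfl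
      have he_le : e ≤ m - 1 := Nat.findGreatest_le _
      have he_lt : e < m := by omega
      have he_spec : a e ≤ a (b n) :=
        Nat.findGreatest_spec (P := fun i => a i ≤ a (b n)) (by omega : b n ≤ m - 1)
          (le_refl (a (b n)))
      have he_gt : ∀ i, e < i → i < m → a (b n) < a i := fun i h1 h2 =>
        Nat.lt_of_not_le
          (Nat.findGreatest_is_greatest (P := fun i => a i ≤ a (b n)) h1 (by omega))
      have hmid : ∀ i, s ≤ i → i ≤ e → a i = a (b n) := fun i h1 h2 =>
        le_antisymm (le_trans (ha i e h2 he_lt) he_spec)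
          (le_trans hs_spec (ha s i h1 (by omega)))
      have hse : s ≤ e := le_trans hs_le he_ge
      have haβ : 1 ≤ a (b n) := by
        have h1 := hC (b n + 1) 1 (by omega) (by omega) (by omega) (by omega)
        have h2 : ∑ i ∈ Finset.range (b n + 1), a i ≤ (b n + 1) * a (b n) := by
          have := Finset.sum_le_card_nsmul (Finset.range (b n + 1)) a (a (b n))
            (fun i hi => ha i (b n) (by have := Finset.mem_range.mp hi; omega) hcase)
          simpa [Finset.card_range, mul_comm] using this
        have h4 : ∑ j ∈ Finset.range 1, b j = b 0 := Finset.sum_range_one b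
        have h3 : b 0 ≤ b n := hb 0 n (Nat.zero_le _) (Nat.lt_succ_self n)
        rcases Nat.eq_zero_or_pos (a (b n)) with h0 | h0
        · exfalso; rw [h0, Nat.mul_zero] at h2; rw [Nat.mul_one] at h1; omega
        · exact h0
      set t := s + (e + 1 - b n) with ht_def
      have hts : s ≤ t := by omega
      have hte : t ≤ e + 1 := by omega
      set dec : ℕ → ℕ :=
        (fun i => if i < s then 0 else if i < t then 1 else if i ≤ e then 0 else 1)
        with hdec_def
      have hdec01 : ∀ i, dec i ≤ 1 := by
        intro i; simp only [hdec_def]; split_ifs <;> omega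
      have hinv0 : ∀ k, dec k = 0 → k < s ∨ (t ≤ k ∧ k ≤ e) := by
        intro k h; simp only [hdec_def] at h; split_ifs at h <;> omega
      have hinv1 : ∀ k, dec k = 1 → (s ≤ k ∧ k < t) ∨ e < k := by
        intro k h; simp only [hdec_def] at h; split_ifs at h <;> omega
      have hdecpos : ∀ i, i < m → dec i ≤ a i := by
        intro i him
        rcases Nat.eq_zero_or_pos (dec i) with h0 | h0
        · omega
        · have h1 : dec i = 1 := by have := hdec01 i; omega
          rcases hinv1 i h1 with ⟨h2, h3⟩ | h2
          · have := hmid i h2 (by omega); omega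
          · have := he_gt i h2 him; omega
      set a' : ℕ → ℕ := (fun i => a i - dec i) with ha'_def
      have ha'sum : ∀ i, i < m → a' i + dec i = a i := by
        intro i h; simp only [ha'_def]; exact Nat.sub_add_cancel (hdecpos i h)
      have hdsum : ∀ p, ∑ i ∈ Finset.range p, dec i = (min p t - min p s) + (p - min p (e + 1)) := by
        intro p
        induction p with
        | zero => simp
        | succ p ih =>
          rw [Finset.sum_range_succ, ih]
          simp only [hdec_def]
          split_ifs <;> omega
      have hAd : ∀ p, p ≤ m →
          ∑ i ∈ Finset.range p, a' i + ∑ i ∈ Finset.range p, dec i = ∑ i ∈ Finset.range p, a i := by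
        intro p hp
        rw [← Finset.sum_add_distrib]
        exact Finset.sum_congr rfl (fun i hi => ha'sum i (by
          have := Finset.mem_range.mp hi; omega))
      -- monotonicity of a'
      have ha'mono : ∀ i j, i ≤ j → j < m → a' i ≤ a' j := by
        intro i j hij hj
        have haij := ha i j hij hj
        have hdi := hdec01 i
        have hdj := hdec01 j
        rcases Nat.eq_zero_or_pos (dec i) with hdi0 | hdi1
        · rcases Nat.eq_zero_or_pos (dec j) with hdj0 | hdj1
          · simp only [ha'_def]; omega
          · have hdj' : dec j = 1 := by omega
            have key : a i < a j := by
              rcases hinv0 i hdi0 with hi1 | ⟨hi2a, hi2b⟩ <;>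
                rcases hinv1 j hdj' with ⟨hj1a, hj1b⟩ | hj2
              · have k1 := hs_lt i hi1
                have k2 := hmid j hj1a (by omega)
                omega
              · have k1 := hs_lt i hi1
                have k2 := he_gt j hj2 hj
                omega
              · omega
              · have k1 := hmid i (by omega) hi2b
                have k2 := he_gt j hj2 hj
                omega
            simp only [ha'_def]; omega
        · simp only [ha'_def]; omega
      -- the inequalities for the reduced pair
      have hC' : ∀ p q, 1 ≤ p → p ≤ m → 1 ≤ q → q ≤ n →
          p * q ≤ ∑ i ∈ Finset.range p, a' i + ∑ j ∈ Finset.range q, b j := by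
        intro p q hp hpm hq hqn
        by_cases hc1 : a (b n) ≤ q
        · by_cases hc2 : p ≤ e + 1
          · have hsplit : ∑ i ∈ Finset.range p, a' i + ∑ i ∈ Finset.Ico p (e + 1), a' i
                = ∑ i ∈ Finset.range (e + 1), a' i := by
              simp only [Finset.range_eq_Ico]
              exact Finset.sum_Ico_consecutive _ (Nat.zero_le p) hc2
            have hde : ∑ i ∈ Finset.range (e + 1), dec i = e + 1 - b n := by
              rw [hdsum]; omega
            have hA : ∑ i ∈ Finset.range (e + 1), a' i + (e + 1 - b n)
                = ∑ i ∈ Finset.range (e + 1), a i := by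
              rw [← hde]; exact hAd (e + 1) (by omega)
            have hmidbound : ∑ i ∈ Finset.Ico p (e + 1), a' i ≤ (e + 1 - p) * q := by
              have hbd : ∀ i ∈ Finset.Ico p (e + 1), a' i ≤ q := by
                intro i hi
                have hi' := Finset.mem_Ico.mp hi
                have key2 : a i ≤ a (b n) := by
                  rcases Nat.lt_or_ge i s with h | h
                  · exact le_of_lt (hs_lt i h)
                  · exact le_of_eq (hmid i h (by omega))
                simp only [ha'_def]; omega
              have := Finset.sum_le_card_nsmul (Finset.Ico p (e + 1)) a' q hbd
              simpa [Nat.card_Ico, mul_comm] using this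
            have hCe := hC (e + 1) (q + 1) (by omega) (by omega) (by omega) (by omega)
            have hBq : ∑ j ∈ Finset.range (q + 1), b j = ∑ j ∈ Finset.range q, b j + b q :=
              Finset.sum_range_succ _ _
            have hbq : b q ≤ b n := hb q n (by omega) (Nat.lt_succ_self n)
            have hmm1 : (e + 1 - p) * q + p * q = (e + 1) * q := by
              rw [← Nat.add_mul]; congr 1; omega
            have hmm2 : (e + 1) * (q + 1) = (e + 1) * q + (e + 1) := by ring
            have hmm3 : (e + 1 - b n) + b n = e + 1 := by omega
            linarith
          · push_neg at hc2
            have hdp : ∑ i ∈ Finset.range p, dec i = p - b n := by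
              rw [hdsum]; omega
            have hA := hAd p hpm
            rw [hdp] at hA
            have hCp := hC p (q + 1) hp hpm (by omega) (by omega)
            have hBq : ∑ j ∈ Finset.range (q + 1), b j = ∑ j ∈ Finset.range q, b j + b q :=
              Finset.sum_range_succ _ _
            have hbq : b q ≤ b n := hb q n (by omega) (Nat.lt_succ_self n)
            have hmm : p * (q + 1) = p * q + p := by ring
            have hmm3 : (p - b n) + b n = p := by omega
            linarith
        · push_neg at hc1
          by_cases hc2 : p ≤ s
          · have hAp : ∑ i ∈ Finset.range p, a' i = ∑ i ∈ Finset.range p, a i := by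
              refine Finset.sum_congr rfl (fun i hi => ?_)
              have hi' := Finset.mem_range.mp hi
              have : dec i = 0 := by simp only [hdec_def]; split_ifs <;> omega
              simp only [ha'_def]; omega
            rw [hAp]; exact hC p q hp hpm hq (by omega)
          · push_neg at hc2
            have hsplit : ∑ i ∈ Finset.range s, a' i + ∑ i ∈ Finset.Ico s p, a' i
                = ∑ i ∈ Finset.range p, a' i := by
              simp only [Finset.range_eq_Ico]
              exact Finset.sum_Ico_consecutive _ (Nat.zero_le s) (by omega)
            have hAs : ∑ i ∈ Finset.range s, a' i = ∑ i ∈ Finset.range s, a i := by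
              refine Finset.sum_congr rfl (fun i hi => ?_)
              have hi' := Finset.mem_range.mp hi
              have : dec i = 0 := by simp only [hdec_def]; split_ifs <;> omega
              simp only [ha'_def]; omega
            have hlowbd : ∀ i ∈ Finset.Ico s p, q ≤ a' i := by
              intro i hi
              have hi' := Finset.mem_Ico.mp hi
              by_cases hie : i ≤ e
              · have k1 := hmid i hi'.1 hie
                have k2 := hdec01 i
                simp only [ha'_def]; omega
              · have k1 := he_gt i (by omega) (by omega)
                have k2 := hdec01 i
                simp only [ha'_def]; omega
            have hsum_low : (p - s) * q ≤ ∑ i ∈ Finset.Ico s p, a' i := by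
              have := Finset.card_nsmul_le_sum (Finset.Ico s p) a' q hlowbd
              simpa [Nat.card_Ico, mul_comm] using this
            have hCs : s * q ≤ ∑ i ∈ Finset.range s, a i + ∑ j ∈ Finset.range q, b j := by
              rcases Nat.eq_zero_or_pos s with h0 | h0
              · simp [h0]
              · exact hC s q h0 (by omega) hq (by omega)
            have hmm : s * q + (p - s) * q = p * q := by
              rw [← Nat.add_mul]; congr 1; omega
            linarith
      have hE'2 : ∑ i ∈ Finset.range m, a' i + ∑ j ∈ Finset.range n, b j = m * n := by
        have hdm : ∑ i ∈ Finset.range m, dec i = m - b n := by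
          rw [hdsum]; omega
        have hA := hAd m le_rfl
        rw [hdm] at hA
        have hmm3 : (m - b n) + b n = m := by omega
        linarith
      obtain ⟨o', hU', hV'⟩ := IH m a' b ha'mono hb' hC' hE'2
      obtain ⟨o, hoU, hoV, hoLast⟩ := extend_orientation o' (fun i => decide (dec i = 1))
      refine ⟨o, ?_, ?_⟩
      · intro i
        rw [hoU i, hU' i]
        have h01 := hdec01 i.val
        have hsum := ha'sum i.val i.isLt
        rcases Nat.le_one_iff_eq_zero_or_eq_one.mp h01 with h | h <;> rw [h] at hsum <;>
          simp [h] <;> omega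
      · intro j
        refine Fin.lastCases ?_ (fun j' => ?_) j
        · rw [hoLast]
          have hdm : ∑ i ∈ Finset.range m, dec i = m - b n := by
            rw [hdsum]; omega
          have hcard :
              (Finset.univ.filter (fun i : Fin m => (decide (dec i.val = 1)) = false)).card
                + ∑ i ∈ Finset.range m, dec i = m := by
            rw [Finset.card_filter, ← Fin.sum_univ_eq_sum_range, ← Finset.sum_add_distrib]
            have : ∀ i : Fin m,
                ((if (decide (dec i.val = 1)) = false then 1 else 0) + dec i.val) = 1 := by
              intro i
              have := hdec01 i.val
              rcases Nat.le_one_iff_eq_zero_or_eq_one.mp this with h | h <;> simp [h]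
            rw [Finset.sum_congr rfl (fun i _ => this i)]
            simp [mul_comm]
          rw [Fin.val_last]
          omega
        · rw [hoV j', hV' j', Fin.coe_castSucc]

/-- (Beineke–Moon) Non-decreasing sequences `a 0, …, a (m-1)` and `b 0, …, b (n-1)`
of non-negative integers are the losing score lists of some bipartite tournament
iff `∑_{i<p} a i + ∑_{j<q} b j ≥ p·q` for all `1 ≤ p ≤ m`, `1 ≤ q ≤ n`, with
equality when `p = m` and `q = n`. -/
theorem bipartite_losing_score_lists_iff (m n : ℕ) (hm : 0 < m) (hn : 0 < n)
    (a b : ℕ → ℕ)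
    (ha : ∀ i j, i ≤ j → j < m → a i ≤ a j)
    (hb : ∀ i j, i ≤ j → j < n → b i ≤ b j) :
    IsBipartiteLosingScoreLists m n a b ↔
      ((∀ p q, 1 ≤ p → p ≤ m → 1 ≤ q → q ≤ n →
          p * q ≤ ∑ i ∈ Finset.range p, a i + ∑ j ∈ Finset.range q, b j) ∧
        ∑ i ∈ Finset.range m, a i + ∑ j ∈ Finset.range n, b j = m * n) := by
  constructor
  · rintro ⟨o, σ, τ, hU, hV⟩
    constructor
    · intro p q hp hpm hq hqn
      set S : Finset (Fin m) :=
        Finset.univ.image (fun i : Fin p => σ (Fin.castLE hpm i)) with hS_def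
      set T : Finset (Fin n) :=
        Finset.univ.image (fun j : Fin q => τ (Fin.castLE hqn j)) with hT_def
      have hinjS : Function.Injective (fun i : Fin p => σ (Fin.castLE hpm i)) :=
        fun x y hxy => Fin.castLE_injective hpm (σ.injective hxy)
      have hinjT : Function.Injective (fun j : Fin q => τ (Fin.castLE hqn j)) :=
        fun x y hxy => Fin.castLE_injective hqn (τ.injective hxy)
      have hScard : S.card = p := by
        rw [hS_def, Finset.card_image_of_injective _ hinjS]; simp
      have hTcard : T.card = q := by
        rw [hT_def, Finset.card_image_of_injective _ hinjT]; simp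
      have hSsum : ∑ i ∈ Finset.range p, a i = ∑ u ∈ S, losingScoreU o u := by
        rw [hS_def, Finset.sum_image (fun x _ y _ h => hinjS h)]
        rw [← Fin.sum_univ_eq_sum_range (fun i => a i) p]
        exact Finset.sum_congr rfl (fun i _ => hU (Fin.castLE hpm i))
      have hTsum : ∑ j ∈ Finset.range q, b j = ∑ v ∈ T, losingScoreV o v := by
        rw [hT_def, Finset.sum_image (fun x _ y _ h => hinjT h)]
        rw [← Fin.sum_univ_eq_sum_range (fun j => b j) q]
        exact Finset.sum_congr rfl (fun j _ => hV (Fin.castLE hqn j))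
      rw [hSsum, hTsum]
      calc p * q = S.card * T.card := by rw [hScard, hTcard]
        _ ≤ _ := sum_scores o S T
    · have h1 : ∑ i ∈ Finset.range m, a i = ∑ u : Fin m, losingScoreU o u := by
        rw [← Fin.sum_univ_eq_sum_range (fun i => a i) m]
        rw [Finset.sum_congr rfl (fun i (_ : i ∈ Finset.univ) => hU i)]
        exact Equiv.sum_comp σ (losingScoreU o)
      have h2 : ∑ j ∈ Finset.range n, b j = ∑ v : Fin n, losingScoreV o v := by
        rw [← Fin.sum_univ_eq_sum_range (fun j => b j) n]
        rw [Finset.sum_congr rfl (fun j (_ : j ∈ Finset.univ) => hV j)]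
        exact Equiv.sum_comp τ (losingScoreV o)
      rw [h1, h2]
      exact total_scores o
  · rintro ⟨hC, hE⟩
    obtain ⟨o, hU, hV⟩ := exists_orientation n m a b ha hb hC hE
    exact ⟨o, Equiv.refl _, Equiv.refl _, fun i => (hU i).symm, fun j => (hV j).symm⟩
end
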